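/- Let D_S and D_T be data distributions on X × {−1,+1} and let h : X → {−1,+1} be a measurable classifier. Then max{ err_{D_S}(h), err_{D_T}(h) } ≥ ( d_TV((D_S)_Y, (D_T)_Y) − d_TV((D_S)_X, (D_T)_X) ) / 2, where (D)_Y denotes the label marginal of D, (D)_X denotes the feature marginal of D (the pushforward under (x,y) ↦ x), and the total variation distance between two probability measures P, Q on a measurable space is d_TV(P,Q) := sup over measurable sets A of |P(A) − Q(A)|. -/

import Mathlib

open MeasureTheory

/-- Classification error of classifier `h` (labels encoded as `Bool`, `true = +1`,
`false = -1`) on a data distribution `D` over `X × Bool`. -/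
noncomputable def err {X : Type*} [MeasurableSpace X]
    (D : Measure (X × Bool)) (h : X → Bool) : ℝ :=
  (D {p : X × Bool | h p.1 ≠ p.2}).toReal

/-- Total variation distance between two (probability) measures on a measurable space:
`sup_{A measurable} |P(A) − Q(A)|`. -/
noncomputable def dTV {Y : Type*} [MeasurableSpace Y] (P Q : Measure Y) : ℝ :=
  sSup {r : ℝ | ∃ A : Set Y, MeasurableSet A ∧ r = |(P A).toReal - (Q A).toReal|}

lemma err_key {X : Type*} [MeasurableSpace X]
    (D : Measure (X × Bool)) [IsProbabilityMeasure D]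
    (h : X → Bool) (hm : Measurable h) (A : Set Bool) :
    |(D.map Prod.snd A).toReal - (D.map Prod.fst (h ⁻¹' A)).toReal| ≤ err D h := by
  have hA : MeasurableSet A := trivial
  rw [Measure.map_apply measurable_snd hA,
    Measure.map_apply measurable_fst (hA.preimage hm)]
  set S : Set (X × Bool) := Prod.snd ⁻¹' A with hS
  set T : Set (X × Bool) := Prod.fst ⁻¹' (h ⁻¹' A) with hT
  set E : Set (X × Bool) := {p : X × Bool | h p.1 ≠ p.2} with hE
  have hST : S ⊆ T ∪ E := by
    intro p hp
    by_cases hc : h p.1 = p.2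
    · left; simpa [hS, hT, hc] using hp
    · right; exact hc
  have hTS : T ⊆ S ∪ E := by
    intro p hp
    by_cases hc : h p.1 = p.2
    · left; simp only [hS, Set.mem_preimage]; rw [← hc]; exact hp
    · right; exact hc
  have h1 : D S ≤ D T + D E := (measure_mono hST).trans (measure_union_le _ _)
  have h2 : D T ≤ D S + D E := (measure_mono hTS).trans (measure_union_le _ _)
  have fS := measure_ne_top D S
  have fT := measure_ne_top D T
  have fE := measure_ne_top D E
  rw [abs_sub_le_iff]
  constructor
  · have := ENNReal.toReal_mono (by finiteness) h1
    rw [ENNReal.toReal_add fT fE] at this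
    simp only [err]; linarith
  · have := ENNReal.toReal_mono (by finiteness) h2
    rw [ENNReal.toReal_add fS fE] at this
    simp only [err]; linarith

lemma dTV_bddAbove {Y : Type*} [MeasurableSpace Y] (P Q : Measure Y)
    [IsFiniteMeasure P] [IsFiniteMeasure Q] :
    BddAbove {r : ℝ | ∃ A : Set Y, MeasurableSet A ∧ r = |(P A).toReal - (Q A).toReal|} := by
  refine ⟨(P Set.univ).toReal + (Q Set.univ).toReal, ?_⟩
  rintro r ⟨A, hA, rfl⟩
  have hP : (P A).toReal ≤ (P Set.univ).toReal :=
    ENNReal.toReal_mono (measure_ne_top _ _) (measure_mono (Set.subset_univ _))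
  have hQ : (Q A).toReal ≤ (Q Set.univ).toReal :=
    ENNReal.toReal_mono (measure_ne_top _ _) (measure_mono (Set.subset_univ _))
  have hP0 : 0 ≤ (P A).toReal := ENNReal.toReal_nonneg
  have hQ0 : 0 ≤ (Q A).toReal := ENNReal.toReal_nonneg
  rw [abs_sub_le_iff]; constructor <;> linarith

theorem tradeoff_lower_bound_feature_marginals
    {X : Type*} [MeasurableSpace X]
    (DS DT : Measure (X × Bool))
    [IsProbabilityMeasure DS] [IsProbabilityMeasure DT]
    (h : X → Bool) (hmeas : Measurable h) :
    max (err DS h) (err DT h) ≥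
      (dTV (DS.map Prod.snd) (DT.map Prod.snd)
        - dTV (DS.map Prod.fst) (DT.map Prod.fst)) / 2 := by
  have key : dTV (DS.map Prod.snd) (DT.map Prod.snd) ≤
      err DS h + err DT h + dTV (DS.map Prod.fst) (DT.map Prod.fst) := by
    refine csSup_le ⟨0, ∅, MeasurableSet.empty, by simp⟩ ?_
    rintro r ⟨A, hA, rfl⟩
    have h1 := err_key DS h hmeas A
    have h2 := err_key DT h hmeas A
    have h3 : |(DS.map Prod.fst (h ⁻¹' A)).toReal - (DT.map Prod.fst (h ⁻¹' A)).toReal| ≤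
        dTV (DS.map Prod.fst) (DT.map Prod.fst) :=
      le_csSup (dTV_bddAbove _ _) ⟨h ⁻¹' A, hA.preimage hmeas, rfl⟩
    calc |(DS.map Prod.snd A).toReal - (DT.map Prod.snd A).toReal|
        ≤ |(DS.map Prod.snd A).toReal - (DS.map Prod.fst (h ⁻¹' A)).toReal|
          + |(DS.map Prod.fst (h ⁻¹' A)).toReal - (DT.map Prod.fst (h ⁻¹' A)).toReal|
          + |(DT.map Prod.fst (h ⁻¹' A)).toReal - (DT.map Prod.snd A).toReal| := by
            have t1 := abs_sub_le ((DS.map Prod.snd A).toReal)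
              ((DS.map Prod.fst (h ⁻¹' A)).toReal) ((DT.map Prod.snd A).toReal)
            have t2 := abs_sub_le ((DS.map Prod.fst (h ⁻¹' A)).toReal)
              ((DT.map Prod.fst (h ⁻¹' A)).toReal) ((DT.map Prod.snd A).toReal)
            linarith
      _ ≤ err DS h + err DT h + dTV (DS.map Prod.fst) (DT.map Prod.fst) := by
            rw [abs_sub_comm ((DT.map Prod.fst (h ⁻¹' A)).toReal) ((DT.map Prod.snd A).toReal)]
            linarith
  have hS : err DS h ≤ max (err DS h) (err DT h) := le_max_left _ _
  have hT : err DT h ≤ max (err DS h) (err DT h) := le_max_right _ _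
  linarith
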